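/- There exists a unique function g : ℝ → ℝ such that g(0) = 0 and g is differentiable at every t ∈ ℝ with g'(t) = (1 + 2·g(t)²)^(−1/2). Moreover this function g is odd (g(−t) = −g(t) for all t), strictly increasing, and a bijection from ℝ onto ℝ. -/

import Mathlib

open Set Filter

noncomputable def Fode : ℝ → ℝ := fun s => ∫ u in (0:ℝ)..s, Real.sqrt (1 + 2 * u ^ 2)

lemma ode_cont : Continuous fun u : ℝ => Real.sqrt (1 + 2 * u ^ 2) := by
  exact (continuous_const.add ((continuous_const.mul (continuous_pow 2)))).sqrt

lemma ode_base_pos (x : ℝ) : (0:ℝ) < 1 + 2 * x ^ 2 := by positivity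

lemma ode_sqrt_pos (x : ℝ) : 0 < Real.sqrt (1 + 2 * x ^ 2) :=
  Real.sqrt_pos.2 (ode_base_pos x)

lemma ode_v_eq (x : ℝ) :
    (1 + 2 * x ^ 2) ^ (-(1 / 2) : ℝ) = (Real.sqrt (1 + 2 * x ^ 2))⁻¹ := by
  rw [Real.rpow_neg (ode_base_pos x).le, ← Real.sqrt_eq_rpow]

lemma Fode_deriv (s : ℝ) : HasDerivAt Fode (Real.sqrt (1 + 2 * s ^ 2)) s :=
  (ode_cont.integral_hasStrictDerivAt 0 s).hasDerivAt

lemma Fode_mono : StrictMono Fode :=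
  strictMono_of_deriv_pos fun x => by
    rw [(Fode_deriv x).deriv]; exact ode_sqrt_pos x

lemma Fode_zero : Fode 0 = 0 := intervalIntegral.integral_same

lemma Fode_odd (s : ℝ) : Fode (-s) = -Fode s := by
  have h := intervalIntegral.integral_comp_neg (a := (0:ℝ)) (b := s)
    (fun u => Real.sqrt (1 + 2 * u ^ 2))
  simp only [neg_sq, neg_zero, mul_neg] at h
  have h' : (∫ u in (-s)..(0:ℝ), Real.sqrt (1 + 2 * u ^ 2))
      = ∫ u in (0:ℝ)..s, Real.sqrt (1 + 2 * u ^ 2) := by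
    rw [← h]
  rw [show Fode (-s) = ∫ u in (0:ℝ)..(-s), Real.sqrt (1 + 2 * u ^ 2) from rfl]
  rw [show Fode s = ∫ u in (0:ℝ)..s, Real.sqrt (1 + 2 * u ^ 2) from rfl, ← h']
  rw [← intervalIntegral.integral_symm]

lemma Fode_ge (s : ℝ) (hs : 0 ≤ s) : s ≤ Fode s := by
  have h1 : (∫ u in (0:ℝ)..s, (1:ℝ)) ≤ ∫ u in (0:ℝ)..s, Real.sqrt (1 + 2 * u ^ 2) := by
    apply intervalIntegral.integral_mono_on hs intervalIntegrable_const
      (ode_cont.intervalIntegrable 0 s)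
    intro x _
    nlinarith [Real.sq_sqrt (show (0:ℝ) ≤ 1 + 2 * x ^ 2 by positivity),
      Real.sqrt_nonneg (1 + 2 * x ^ 2)]
  simpa [Fode] using h1

lemma Fode_surj : Function.Surjective Fode := by
  apply Continuous.surjective
  · exact continuous_iff_continuousAt.2 fun x => (Fode_deriv x).continuousAt
  · exact tendsto_atTop_mono' _ (eventually_atTop.2 ⟨0, fun s hs => Fode_ge s hs⟩) tendsto_id
  · apply tendsto_atBot_mono' _ (eventually_atBot.2 ⟨0, fun s hs => ?_⟩) tendsto_id
    have := Fode_ge (-s) (by linarith)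
    rw [Fode_odd] at this
    simp only [id_eq]
    linarith

noncomputable def odeIso : ℝ ≃o ℝ :=
  StrictMono.orderIsoOfSurjective Fode Fode_mono Fode_surj

noncomputable def gsol : ℝ → ℝ := fun t => odeIso.symm t

lemma gsol_left_inv (t : ℝ) : Fode (gsol t) = t :=
  StrictMono.orderIsoOfSurjective_self_symm_apply Fode Fode_mono Fode_surj t

lemma gsol_zero : gsol 0 = 0 := by
  have := StrictMono.orderIsoOfSurjective_symm_apply_self Fode Fode_mono Fode_surj 0
  rw [Fode_zero] at this; exact this

lemma gsol_deriv (t : ℝ) :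
    HasDerivAt gsol ((1 + 2 * gsol t ^ 2) ^ (-(1 / 2) : ℝ)) t := by
  rw [ode_v_eq]
  exact HasDerivAt.of_local_left_inverse (odeIso.symm.continuous.continuousAt)
    (Fode_deriv (gsol t)) (ode_sqrt_pos (gsol t)).ne'
    (Eventually.of_forall gsol_left_inv)

lemma gsol_odd (t : ℝ) : gsol (-t) = -gsol t := by
  apply Fode_mono.injective
  rw [gsol_left_inv, Fode_odd, gsol_left_inv]

lemma ode_lipschitz : LipschitzWith 1 (fun x : ℝ => (1 + 2 * x ^ 2) ^ (-(1 / 2) : ℝ)) := by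
  have hd : ∀ x : ℝ, HasDerivAt (fun x : ℝ => (1 + 2 * x ^ 2) ^ (-(1 / 2) : ℝ))
      ((4 * x) * (-(1/2)) * (1 + 2 * x ^ 2) ^ ((-(1 / 2) : ℝ) - 1)) x := by
    intro x
    have h1 : HasDerivAt (fun x : ℝ => 1 + 2 * x ^ 2) (4 * x) x := by
      have := ((hasDerivAt_pow 2 x).const_mul 2).const_add 1
      exact this.congr_deriv (by norm_num; ring)
    exact h1.rpow_const (Or.inl (ode_base_pos x).ne')
  apply lipschitzWith_of_nnnorm_deriv_le (fun x => (hd x).differentiableAt)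
  intro x
  rw [(hd x).deriv]
  have key : |(4 * x) * (-(1/2)) * (1 + 2 * x ^ 2) ^ ((-(1 / 2) : ℝ) - 1)| ≤ 1 := by
    have hb := ode_base_pos x
    have h2 : (1 + 2 * x ^ 2) ^ ((-(1 / 2) : ℝ) - 1) ≤ (1 + 2 * x ^ 2)⁻¹ := by
      rw [← Real.rpow_neg_one]
      apply Real.rpow_le_rpow_of_exponent_le (by nlinarith) (by norm_num)
    have h3 : (0:ℝ) < (1 + 2 * x ^ 2) ^ ((-(1 / 2) : ℝ) - 1) := Real.rpow_pos_of_pos hb _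
    rw [abs_mul, abs_mul]
    have h4 : |(1 + 2 * x ^ 2) ^ ((-(1 / 2) : ℝ) - 1)| = (1 + 2 * x ^ 2) ^ ((-(1 / 2) : ℝ) - 1) :=
      abs_of_pos h3
    rw [h4]
    have h5 : |4 * x| * |(-(1/2):ℝ)| = 2 * |x| := by
      rw [abs_mul]; simp [abs_of_nonneg]; ring
    rw [h5]
    calc 2 * |x| * (1 + 2 * x ^ 2) ^ ((-(1 / 2) : ℝ) - 1)
        ≤ 2 * |x| * (1 + 2 * x ^ 2)⁻¹ := by
          apply mul_le_mul_of_nonneg_left h2 (by positivity)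
      _ ≤ 1 := by
          rw [mul_inv_le_iff₀ hb]
          nlinarith [abs_nonneg x, sq_abs x]
  have key2 : ‖(4 * x) * (-(1/2)) * (1 + 2 * x ^ 2) ^ ((-(1 / 2) : ℝ) - 1)‖ ≤ 1 := by
    rw [Real.norm_eq_abs]; exact key
  exact_mod_cast key2

lemma ode_unique (g : ℝ → ℝ) (h0 : g 0 = 0)
    (h' : ∀ t : ℝ, HasDerivAt g ((1 + 2 * g t ^ 2) ^ (-(1 / 2) : ℝ)) t) :
    g = gsol := by
  funext t
  have hb : (0:ℝ) < |t| + 1 := by positivity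
  have hcg : ContinuousOn g (Icc (-(|t| + 1)) (|t| + 1)) :=
    fun x _ => (h' x).continuousAt.continuousWithinAt
  have hcg0 : ContinuousOn gsol (Icc (-(|t| + 1)) (|t| + 1)) :=
    fun x _ => (gsol_deriv x).continuousAt.continuousWithinAt
  have key := ODE_solution_unique_of_mem_Icc
    (v := fun _ x => (1 + 2 * x ^ 2) ^ (-(1 / 2) : ℝ)) (s := fun _ => Set.univ) (K := 1)
    (fun _ _ => ode_lipschitz.lipschitzOnWith)
    (t₀ := 0) (a := -(|t| + 1)) (b := |t| + 1)
    ⟨by linarith [abs_nonneg t], by linarith [abs_nonneg t]⟩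
    hcg (fun x _ => h' x) (fun _ _ => trivial)
    hcg0 (fun x _ => gsol_deriv x) (fun _ _ => trivial)
    (by rw [h0, gsol_zero])
  exact key ⟨by linarith [neg_abs_le t], by linarith [le_abs_self t]⟩

theorem stmt_0 :
    (∃! g : ℝ → ℝ, g 0 = 0 ∧
      ∀ t : ℝ, HasDerivAt g ((1 + 2 * g t ^ 2) ^ (-(1 / 2) : ℝ)) t) ∧
    (∀ g : ℝ → ℝ, g 0 = 0 →
      (∀ t : ℝ, HasDerivAt g ((1 + 2 * g t ^ 2) ^ (-(1 / 2) : ℝ)) t) →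
      (∀ t : ℝ, g (-t) = -g t) ∧ StrictMono g ∧ Function.Bijective g) := by
  constructor
  · exact ⟨gsol, ⟨gsol_zero, gsol_deriv⟩, fun g ⟨h0, h'⟩ => ode_unique g h0 h'⟩
  · intro g h0 h'
    rw [ode_unique g h0 h']
    exact ⟨gsol_odd, odeIso.symm.strictMono, odeIso.symm.bijective⟩
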